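/- A Hausdorff topological group (G, τ) is an s-group (i.e., τ = τ_S for some T_s-set S of sequences) if and only if every sequentially continuous homomorphism from (G, τ) into any Hausdorff topological group is continuous. -/

import Mathlib

open Filter Topology Pointwise

/-- `u` converges to the identity in the group topology `t`. -/
def TendstoOne {G : Type*} [Group G] (t : GroupTopology G) (u : ℕ → G) : Prop :=
  Filter.Tendsto u Filter.atTop (@nhds G t.toTopologicalSpace 1)

/-- The group topology `t` is Hausdorff. -/
def IsHausdorffGT {G : Type*} [Group G] (t : GroupTopology G) : Prop :=
  @T2Space G t.toTopologicalSpace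

/-- `S` is a `T_s`-set of sequences: some Hausdorff group topology makes every
sequence of `S` converge to the identity. -/
def IsTsSet {G : Type*} [Group G] (S : Set (ℕ → G)) : Prop :=
  ∃ t : GroupTopology G, IsHausdorffGT t ∧ ∀ u ∈ S, TendstoOne t u

/-- `τ` is the finest Hausdorff group topology on `G` in which every sequence of `S`
converges to the identity (recall that in Mathlib's order on topologies, finer = smaller). -/
def IsTauS {G : Type*} [Group G] (S : Set (ℕ → G)) (τ : GroupTopology G) : Prop :=
  IsHausdorffGT τ ∧ (∀ u ∈ S, TendstoOne τ u) ∧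
    ∀ t : GroupTopology G, IsHausdorffGT t → (∀ u ∈ S, TendstoOne t u) → τ ≤ t

/-- The given topological-group structure on `G`, as a term of `GroupTopology G`. -/
def ambientGT (G : Type*) [Group G] [τ : TopologicalSpace G] [h : IsTopologicalGroup G] :
    GroupTopology G := ⟨τ, h⟩

/-- The set of all sequences converging to the identity in a group topology. -/
def SeqConvOne {G : Type*} [Group G] (t : GroupTopology G) : Set (ℕ → G) :=
  {u | TendstoOne t u}

/-- `(G, τ)` is an `s`-group: its topology is the finest Hausdorff group topology in which
every member of some `T_s`-set of sequences converges to the identity. -/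
def IsSGroup (G : Type*) [Group G] [TopologicalSpace G] [IsTopologicalGroup G] [T2Space G] :
    Prop :=
  ∃ S : Set (ℕ → G), IsTauS S (ambientGT G)


/-- Auxiliary: multiply a `TendstoOne` sequence by a constant in a group topology. -/
lemma aux_mul_const {G : Type*} [Group G] (t : GroupTopology G) {u : ℕ → G} (x : G)
    (h : TendstoOne t (fun n => u n * x⁻¹)) :
    Filter.Tendsto u Filter.atTop (@nhds G t.toTopologicalSpace x) := by
  letI := t.toTopologicalSpace
  haveI := t.toIsTopologicalGroup
  simpa using h.mul_const x

/-- a Hausdorff topological group `(G, τ)` is an `s`-group (its topology is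
`τ_S` for some `T_s`-set `S`) iff every sequentially continuous homomorphism from `(G, τ)`
into any Hausdorff topological group is continuous. -/
theorem stmt6 {G : Type u} [Group G] [TopologicalSpace G] [IsTopologicalGroup G] [T2Space G] :
    IsSGroup G ↔
      ∀ (X : Type u) (_ : Group X) (_ : TopologicalSpace X) (_ : IsTopologicalGroup X)
        (_ : T2Space X) (p : G →* X), SeqContinuous p → Continuous p :=  by
  constructor
  · rintro ⟨S, hT2, hconv, hmin⟩
    intro X _ _ _ _ p hseq
    let indGT : GroupTopology G :=
      ⟨TopologicalSpace.induced p inferInstance, topologicalGroup_induced p⟩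
    have hle : ambientGT G ≤ ambientGT G ⊓ indGT := by
      apply hmin
      · exact t2Space_antitone (inf_le_left : (ambientGT G ⊓ indGT).toTopologicalSpace ≤ _) hT2
      · intro u hu
        have h1 : TendstoOne (ambientGT G) u := hconv u hu
        have h2 : Filter.Tendsto (p ∘ u) Filter.atTop (𝓝 1) := by
          simpa using hseq h1
        unfold TendstoOne
        rw [GroupTopology.toTopologicalSpace_inf, @_root_.nhds_inf G (ambientGT G).toTopologicalSpace indGT.toTopologicalSpace, tendsto_inf]
        refine ⟨h1, ?_⟩
        rw [show ((indGT : GroupTopology G).toTopologicalSpace)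
            = TopologicalSpace.induced p inferInstance from rfl, nhds_induced, tendsto_comap_iff]
        simpa using h2
    have hle' : ambientGT G ≤ indGT := le_trans hle inf_le_right
    exact continuous_iff_le_induced.mpr hle'
  · intro h
    refine ⟨SeqConvOne (ambientGT G), ‹T2Space G›, fun u hu => hu, ?_⟩
    intro t ht2 htconv
    have hcont : Continuous[_, t.toTopologicalSpace] (MonoidHom.id G) := by
      refine h G ‹_› t.toTopologicalSpace t.toIsTopologicalGroup ht2 (MonoidHom.id G) ?_
      intro u x hux
      have h1 : Filter.Tendsto (fun n => u n * x⁻¹) Filter.atTop (𝓝 1) := by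
        simpa using hux.mul_const x⁻¹
      exact aux_mul_const t x (htconv _ h1)
    rw [← GroupTopology.toTopologicalSpace_le]
    calc (ambientGT G).toTopologicalSpace
        ≤ TopologicalSpace.induced (MonoidHom.id G) t.toTopologicalSpace :=
          continuous_iff_le_induced.mp hcont
      _ = t.toTopologicalSpace := by
          letI := t.toTopologicalSpace; exact induced_id
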